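/- Let q be a power of 2. Then there exists an element a in the finite field F_q such that the polynomial T^3 + aT + 1 is irreducible over F_q. -/
import Mathlib


open Polynomial

/-- Let `q = 2^f` be a power of 2. Then there exists `a` in the finite field `F_q`
such that `T^3 + a*T + 1` is irreducible over `F_q`. -/
theorem stmt0 (F : Type*) [Field F] [Fintype F] (f : ℕ) (hf : 0 < f)
    (hcard : Fintype.card F = 2 ^ f) :
    ∃ a : F, Irreducible (X ^ 3 + C a * X + 1 : F[X]) := by
  classical
  set g : F → F := fun x => -(x ^ 3 + 1) / x with hg
  have himg : (Finset.image g ({0}ᶜ : Finset F)).card < Fintype.card F := by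
    calc (Finset.image g ({0}ᶜ : Finset F)).card ≤ ({0}ᶜ : Finset F).card :=
          Finset.card_image_le
      _ < Fintype.card F := by
          rw [Finset.card_compl, Finset.card_singleton]
          have : 0 < Fintype.card F := Fintype.card_pos
          omega
  obtain ⟨a, ha⟩ : ∃ a : F, a ∉ Finset.image g ({0}ᶜ : Finset F) := by
    by_contra h
    push_neg at h
    have : (Finset.univ : Finset F) ⊆ Finset.image g ({0}ᶜ : Finset F) :=
      fun x _ => h x
    have := Finset.card_le_card this
    rw [Finset.card_univ] at this
    omega
  refine ⟨a, ?_⟩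
  have hdeg : (X ^ 3 + C a * X + 1 : F[X]).natDegree = 3 := by
    compute_degree!
  rw [irreducible_iff_roots_eq_zero_of_degree_le_three (by omega) (by omega)]
  rw [Multiset.eq_zero_iff_forall_notMem]
  intro x hx
  rw [mem_roots, IsRoot, eval_add, eval_add, eval_mul, eval_pow, eval_X, eval_C,
    eval_one] at hx
  · have hx0 : x ≠ 0 := by
      intro h
      rw [h] at hx
      simp at hx
    apply ha
    refine Finset.mem_image.mpr ⟨x, by simp [hx0], ?_⟩
    rw [hg]
    field_simp
    linear_combination -hx
  · intro h
    rw [h] at hdeg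
    simp at hdeg
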